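/- Let k ≥ 1. Consider the abelian group presented as the quotient of ℤ^{2k+1} (with basis e₀, e₁, …, e_{2k}) by the subgroup generated by the k+2 vectors: v₀ = e₀ + e₁ + e₃ + e₅ + ⋯ + e_{2k-1}, v_{k+1} = e₀ + e₂ + e₄ + ⋯ + e_{2k}, and v_h = e_{2h-1} + e_{2h} for h = 1, …, k. This quotient is isomorphic to ℤ^{k-1} ⊕ ℤ/2. -/

import Mathlib

/-- The k+2 relation vectors in ℤ^{2k+1}: row 0 is the indicator of {0,1,3,…,2k-1}
(i.e. j = 0 or j odd), row k+1 is the indicator of {0,2,4,…,2k} (j even), and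
row h (1 ≤ h ≤ k) is the indicator of {2h-1, 2h}. -/
def relVec (k : ℕ) (i : Fin (k + 2)) (j : Fin (2 * k + 1)) : ℤ :=
  if i.val = 0 then (if j.val = 0 ∨ Odd j.val then 1 else 0)
  else if i.val = k + 1 then (if Even j.val then 1 else 0)
  else if j.val = 2 * i.val - 1 ∨ j.val = 2 * i.val then 1 else 0

namespace QVC

lemma sum_split {M : Type*} [AddCommMonoid M] (k : ℕ) (g : ℕ → M) :
    ∑ j ∈ Finset.range (2*k+1), g j
      = g 0 + ∑ h ∈ Finset.range k, (g (2*h+1) + g (2*h+2)) := by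
  induction k with
  | zero => simp
  | succ n ih =>
    rw [show 2*(n+1)+1 = (2*n+1)+1+1 by ring, Finset.sum_range_succ, Finset.sum_range_succ,
      ih, Finset.sum_range_succ]
    rw [show 2*n+1+1 = 2*n+2 by ring]
    abel

lemma fin_sum_range {M : Type*} [AddCommMonoid M] {n : ℕ} (F : Fin n → M) (G : ℕ → M)
    (h : ∀ j : Fin n, F j = G j.val) :
    ∑ j : Fin n, F j = ∑ j ∈ Finset.range n, G j := by
  rw [← Fin.sum_univ_eq_sum_range]
  exact Finset.sum_congr rfl fun j _ => h j

abbrev Tgt (k : ℕ) := (Fin (k-1) → ℤ) × ZMod 2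

def ones (k : ℕ) : Fin (k-1) → ℤ := fun _ => 1
def unit (k r : ℕ) : Fin (k-1) → ℤ := fun i => if i.val = r then 1 else 0

lemma sum_unit (k : ℕ) : ∑ h ∈ Finset.range (k-1), unit k h = ones k := by
  funext i
  rw [Finset.sum_apply]
  simp only [unit, ones]
  rw [Finset.sum_ite_eq (Finset.range (k-1)) i.val (fun _ => (1:ℤ))]
  exact if_pos (Finset.mem_range.2 i.isLt)

def aN (k j : ℕ) : Tgt k :=
  if j = 0 then (0, 1)
  else if j = 2*k then (-(ones k), 1)
  else if j = 2*k - 1 then (ones k, 1)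
  else if Even j then (unit k (j/2 - 1), 0)
  else (-(unit k (j/2)), 0)

lemma aN_zero (k : ℕ) : aN k 0 = (0, 1) := by simp [aN]

lemma aN_odd (k j : ℕ) (h1 : j % 2 = 1) (h2 : j ≠ 2*k - 1) :
    aN k j = (-(unit k (j/2)), 0) := by
  unfold aN
  rw [if_neg (by omega), if_neg (by omega), if_neg h2,
    if_neg (by rw [Nat.even_iff]; omega)]

lemma aN_last_odd (k : ℕ) (hk : 1 ≤ k) : aN k (2*k-1) = (ones k, 1) := by
  unfold aN
  rw [if_neg (by omega), if_neg (by omega), if_pos rfl]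

lemma aN_even (k j : ℕ) (h1 : j % 2 = 0) (h0 : j ≠ 0) (h2 : j ≠ 2*k) :
    aN k j = (unit k (j/2 - 1), 0) := by
  unfold aN
  rw [if_neg h0, if_neg h2, if_neg (by omega), if_pos (by rw [Nat.even_iff]; omega)]

lemma aN_last_even (k : ℕ) (hk : 1 ≤ k) : aN k (2*k) = (-(ones k), 1) := by
  unfold aN
  rw [if_neg (by omega), if_pos rfl]

def phi (k : ℕ) : (Fin (2*k+1) → ℤ) →+ Tgt k where
  toFun x := ∑ j : Fin (2*k+1), x j • aN k j.val
  map_zero' := by simp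
  map_add' x y := by
    simp only [Pi.add_apply, add_smul, Finset.sum_add_distrib]

lemma phi_apply (k : ℕ) (x : Fin (2*k+1) → ℤ) :
    phi k x = ∑ j : Fin (2*k+1), x j • aN k j.val := rfl

def eN (k j : ℕ) : Fin (2*k+1) → ℤ := fun j' => if j'.val = j then 1 else 0

lemma phi_eN (k j : ℕ) (hj : j < 2*k+1) : phi k (eN k j) = aN k j := by
  rw [phi_apply]
  rw [Finset.sum_eq_single (⟨j, hj⟩ : Fin (2*k+1))]
  · simp [eN]
  · intro b _ hb
    have : b.val ≠ j := fun h => hb (Fin.ext h)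
    simp [eN, this]
  · simp

lemma phi_relVec (k : ℕ) (hk : 1 ≤ k) (i : Fin (k+2)) : phi k (relVec k i) = 0 := by
  obtain ⟨m, rfl⟩ : ∃ m, k = m + 1 := ⟨k - 1, by omega⟩
  clear hk
  rw [phi_apply]
  by_cases hi0 : i.val = 0
  · rw [fin_sum_range (fun j : Fin (2*(m+1)+1) => relVec (m+1) i j • aN (m+1) j.val)
      (fun j => (if j = 0 ∨ Odd j then (1:ℤ) else 0) • aN (m+1) j)
      (fun j => by beta_reduce; unfold relVec; rw [if_pos hi0])]
    rw [sum_split]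
    rw [if_pos (Or.inl rfl), one_smul, aN_zero]
    have hterm : ∀ h ∈ Finset.range (m+1),
        ((if (2*h+1) = 0 ∨ Odd (2*h+1) then (1:ℤ) else 0) • aN (m+1) (2*h+1)
          + (if (2*h+2) = 0 ∨ Odd (2*h+2) then (1:ℤ) else 0) • aN (m+1) (2*h+2))
        = aN (m+1) (2*h+1) := by
      intro h _
      rw [if_pos (Or.inr (by rw [Nat.odd_iff]; omega)), one_smul,
        if_neg (by rw [Nat.odd_iff]; omega), zero_smul, add_zero]
    rw [Finset.sum_congr rfl hterm, Finset.sum_range_succ]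
    have hmid : ∀ h ∈ Finset.range m, aN (m+1) (2*h+1) = (-(unit (m+1) h), 0) := by
      intro h hh
      rw [Finset.mem_range] at hh
      have e : (2*h+1)/2 = h := by omega
      rw [aN_odd (m+1) (2*h+1) (by omega) (by omega), e]
    rw [Finset.sum_congr rfl hmid, show 2*m+1 = 2*(m+1)-1 by omega,
      aN_last_odd (m+1) (by omega)]
    refine Prod.ext ?_ ?_
    · simp only [Prod.fst_add, Prod.fst_sum, Prod.fst_zero]
      have hs : ∑ x ∈ Finset.range m, unit (m+1) x = ones (m+1) := by
        have := sum_unit (m+1)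
        simpa using this
      rw [Finset.sum_neg_distrib, hs]
      abel
    · simp only [Prod.snd_add, Prod.snd_sum, Prod.snd_zero, Finset.sum_const_zero]
      decide
  · by_cases hik : i.val = (m+1) + 1
    · rw [fin_sum_range (fun j : Fin (2*(m+1)+1) => relVec (m+1) i j • aN (m+1) j.val)
        (fun j => (if Even j then (1:ℤ) else 0) • aN (m+1) j)
        (fun j => by beta_reduce; unfold relVec; rw [if_neg hi0, if_pos hik])]
      rw [sum_split]
      rw [if_pos (Even.zero), one_smul, aN_zero]
      have hterm : ∀ h ∈ Finset.range (m+1),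
          ((if Even (2*h+1) then (1:ℤ) else 0) • aN (m+1) (2*h+1)
            + (if Even (2*h+2) then (1:ℤ) else 0) • aN (m+1) (2*h+2))
          = aN (m+1) (2*h+2) := by
        intro h _
        rw [if_neg (by rw [Nat.even_iff]; omega), zero_smul,
          if_pos (by rw [Nat.even_iff]; omega), one_smul, zero_add]
      rw [Finset.sum_congr rfl hterm, Finset.sum_range_succ]
      have hmid : ∀ h ∈ Finset.range m, aN (m+1) (2*h+2) = (unit (m+1) h, 0) := by
        intro h hh
        rw [Finset.mem_range] at hh
        have e : (2*h+2)/2 - 1 = h := by omega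
        rw [aN_even (m+1) (2*h+2) (by omega) (by omega) (by omega), e]
      rw [Finset.sum_congr rfl hmid, show 2*m+2 = 2*(m+1) by omega,
        aN_last_even (m+1) (by omega)]
      refine Prod.ext ?_ ?_
      · simp only [Prod.fst_add, Prod.fst_sum, Prod.fst_zero]
        have hs : ∑ x ∈ Finset.range m, unit (m+1) x = ones (m+1) := by
          have := sum_unit (m+1)
          simpa using this
        rw [hs]
        abel
      · simp only [Prod.snd_add, Prod.snd_sum, Prod.snd_zero, Finset.sum_const_zero]
        decide
    · have hi1 : 1 ≤ i.val := by omega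
      have hik' : i.val ≤ m + 1 := by have := i.isLt; omega
      rw [fin_sum_range (fun j : Fin (2*(m+1)+1) => relVec (m+1) i j • aN (m+1) j.val)
        (fun j => (if j = 2*i.val - 1 ∨ j = 2*i.val then (1:ℤ) else 0) • aN (m+1) j)
        (fun j => by beta_reduce; unfold relVec; rw [if_neg hi0, if_neg hik])]
      rw [sum_split]
      rw [if_neg (by omega), zero_smul, zero_add]
      rw [Finset.sum_eq_single (i.val - 1)]
      · rw [if_pos (by omega), if_pos (by omega), one_smul, one_smul]
        by_cases hlast : i.val = m + 1
        · rw [show 2*(i.val-1)+1 = 2*(m+1)-1 by omega, show 2*(i.val-1)+2 = 2*(m+1) by omega,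
            aN_last_odd (m+1) (by omega), aN_last_even (m+1) (by omega)]
          refine Prod.ext ?_ ?_
          · simp
          · simp only [Prod.snd_add, Prod.snd_zero]
            decide
        · rw [aN_odd (m+1) (2*(i.val-1)+1) (by omega) (by omega),
            aN_even (m+1) (2*(i.val-1)+2) (by omega) (by omega) (by omega)]
          have e1 : (2*(i.val-1)+1)/2 = i.val - 1 := by omega
          have e2 : (2*(i.val-1)+2)/2 - 1 = i.val - 1 := by omega
          rw [e1, e2]
          refine Prod.ext ?_ ?_ <;> simp
      · intro b _ hb
        rw [if_neg (by omega), if_neg (by omega), zero_smul, zero_smul, add_zero]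
      · intro hnot
        exact absurd (Finset.mem_range.2 (by omega)) hnot


/-! ### The subgroup of relations -/

abbrev Cl (k : ℕ) : AddSubgroup (Fin (2*k+1) → ℤ) :=
  AddSubgroup.closure (Set.range (relVec k))

lemma relVec_mem (k : ℕ) (i : Fin (k+2)) : relVec k i ∈ Cl k :=
  AddSubgroup.subset_closure ⟨i, rfl⟩

def vsum (k : ℕ) : Fin (2*k+1) → ℤ :=
  ∑ h : Fin k, relVec k ⟨h.val+1, by omega⟩

def esum (k : ℕ) : Fin (2*k+1) → ℤ :=
  ∑ h : Fin (k-1), eN k (2*h.val+2)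

lemma vsum_mem (k : ℕ) : vsum k ∈ Cl k :=
  sum_mem fun h _ => relVec_mem k _

lemma vsum_apply (k : ℕ) (j : Fin (2*k+1)) :
    vsum k j = if 1 ≤ j.val ∧ j.val ≤ 2*k then 1 else 0 := by
  unfold vsum
  rw [Finset.sum_apply]
  have hform : ∀ h : Fin k, relVec k ⟨h.val+1, by omega⟩ j
      = if j.val = 2*(h.val+1) - 1 ∨ j.val = 2*(h.val+1) then 1 else 0 := by
    intro h
    unfold relVec
    dsimp only
    rw [if_neg (by omega), if_neg (by have := h.isLt; omega)]
  rw [Finset.sum_congr rfl (fun h _ => hform h)]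
  by_cases hj : 1 ≤ j.val ∧ j.val ≤ 2*k
  · rw [Finset.sum_eq_single (⟨(j.val-1)/2, by omega⟩ : Fin k)]
    · dsimp only
      rw [if_pos (by omega), if_pos hj]
    · intro b _ hb
      refine if_neg ?_
      have hbv : b.val ≠ (j.val-1)/2 := fun hc => hb (Fin.ext hc)
      omega
    · simp
  · rw [if_neg hj, Finset.sum_eq_zero]
    intro b _
    refine if_neg ?_
    have := b.isLt
    omega

lemma esum_apply (k : ℕ) (j : Fin (2*k+1)) :
    esum k j = if j.val % 2 = 0 ∧ 2 ≤ j.val ∧ j.val ≤ 2*k - 2 then 1 else 0 := by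
  unfold esum
  rw [Finset.sum_apply]
  have hform : ∀ h : Fin (k-1), eN k (2*h.val+2) j
      = if j.val = 2*h.val+2 then 1 else 0 := fun h => rfl
  rw [Finset.sum_congr rfl (fun h _ => hform h)]
  by_cases hj : j.val % 2 = 0 ∧ 2 ≤ j.val ∧ j.val ≤ 2*k - 2
  · have hk2 : 2 ≤ k := by have := j.isLt; omega
    rw [Finset.sum_eq_single (⟨(j.val-2)/2, by omega⟩ : Fin (k-1))]
    · dsimp only
      rw [if_pos (by omega), if_pos hj]
    · intro b _ hb
      refine if_neg ?_
      have hbv : b.val ≠ (j.val-2)/2 := fun hc => hb (Fin.ext hc)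
      omega
    · simp
  · rw [if_neg hj, Finset.sum_eq_zero]
    intro b _
    refine if_neg ?_
    have := b.isLt
    have := j.isLt
    omega

lemma two_e0_mem (k : ℕ) (hk : 1 ≤ k) : (2:ℤ) • eN k 0 ∈ Cl k := by
  have hx : (2:ℤ) • eN k 0
      = relVec k ⟨0, by omega⟩ + relVec k ⟨k+1, by omega⟩ - vsum k := by
    funext j
    have hj := j.isLt
    simp only [Pi.add_apply, Pi.sub_apply, Pi.smul_apply, smul_eq_mul,
      vsum_apply, relVec, eN, Nat.odd_iff, Nat.even_iff]
    split_ifs <;> first | omega | exact absurd trivial (by assumption) | exact (False.elim (by assumption))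
  rw [hx]
  exact sub_mem (add_mem (relVec_mem k _) (relVec_mem k _)) (vsum_mem k)

lemma f2_mem (k : ℕ) (hk : 1 ≤ k) :
    eN k (2*k-1) - eN k 0 - esum k ∈ Cl k := by
  have hx : eN k (2*k-1) - eN k 0 - esum k
      = relVec k ⟨k, by omega⟩ - relVec k ⟨k+1, by omega⟩ := by
    funext j
    have hj := j.isLt
    simp only [Pi.sub_apply, esum_apply, relVec, eN, Nat.odd_iff, Nat.even_iff]
    split_ifs <;> first | omega | exact absurd trivial (by assumption) | exact (False.elim (by assumption))
  rw [hx]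
  exact sub_mem (relVec_mem k _) (relVec_mem k _)

lemma f3_mem (k : ℕ) (hk : 1 ≤ k) :
    eN k (2*k) - eN k 0 + esum k ∈ Cl k := by
  have hx : eN k (2*k) - eN k 0 + esum k
      = vsum k - relVec k ⟨0, by omega⟩ := by
    funext j
    have hj := j.isLt
    simp only [Pi.add_apply, Pi.sub_apply, esum_apply, vsum_apply, relVec, eN,
      Nat.odd_iff, Nat.even_iff]
    split_ifs <;> first | omega | exact absurd trivial (by assumption) | exact (False.elim (by assumption))
  rw [hx]
  exact sub_mem (vsum_mem k) (relVec_mem k _)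

lemma pair_mem (k m : ℕ) (h1 : 1 ≤ m) (h2 : m ≤ k) :
    eN k (2*m-1) + eN k (2*m) ∈ Cl k := by
  have hx : eN k (2*m-1) + eN k (2*m) = relVec k ⟨m, by omega⟩ := by
    funext j
    have hj := j.isLt
    simp only [Pi.add_apply, relVec, eN, Nat.odd_iff, Nat.even_iff]
    split_ifs <;> first | omega | exact absurd trivial (by assumption) | exact (False.elim (by assumption))
  rw [hx]
  exact relVec_mem k _


/-! ### The quotient and the isomorphism -/

abbrev Qt (k : ℕ) := (Fin (2*k+1) → ℤ) ⧸ Cl k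

abbrev mkq (k : ℕ) : (Fin (2*k+1) → ℤ) →+ Qt k := QuotientAddGroup.mk' (Cl k)

lemma mkq_eq_zero (k : ℕ) {x : Fin (2*k+1) → ℤ} (hx : x ∈ Cl k) : mkq k x = 0 :=
  (QuotientAddGroup.eq_zero_iff x).2 hx

def tau (k : ℕ) (hk : 1 ≤ k) : ZMod 2 →+ Qt k :=
  ZMod.lift 2 ⟨(zmultiplesHom (Qt k)) (mkq k (eN k 0)), by
    simp only [zmultiplesHom_apply]
    have : ((2:ℕ):ℤ) • mkq k (eN k 0) = mkq k ((2:ℤ) • eN k 0) := by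
      push_cast
      rw [map_zsmul]
    rw [this, mkq_eq_zero k (two_e0_mem k hk)]⟩

lemma tau_intCast (k : ℕ) (hk : 1 ≤ k) (n : ℤ) :
    tau k hk ((n : ZMod 2)) = n • mkq k (eN k 0) := by
  unfold tau
  rw [ZMod.lift_coe]
  simp [zmultiplesHom_apply]

def psi (k : ℕ) (hk : 1 ≤ k) : Tgt k →+ Qt k where
  toFun p := (∑ h : Fin (k-1), p.1 h • mkq k (eN k (2*h.val+2))) + tau k hk p.2
  map_zero' := by simp
  map_add' p q := by
    have hsm : ∀ (x : Fin (k-1)) (v : Qt k), (p.1 x + q.1 x) • v = p.1 x • v + q.1 x • v :=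
      fun x v => add_smul _ _ v
    simp only [Prod.fst_add, Prod.snd_add, Pi.add_apply, map_add, hsm]
    rw [Finset.sum_add_distrib]
    abel

lemma psi_apply (k : ℕ) (hk : 1 ≤ k) (p : Tgt k) :
    psi k hk p = (∑ h : Fin (k-1), p.1 h • mkq k (eN k (2*h.val+2))) + tau k hk p.2 := rfl

lemma cl_le_ker (k : ℕ) (hk : 1 ≤ k) : Cl k ≤ (phi k).ker := by
  rw [AddSubgroup.closure_le]
  rintro x ⟨i, rfl⟩
  exact phi_relVec k hk i

def phibar (k : ℕ) (hk : 1 ≤ k) : Qt k →+ Tgt k :=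
  QuotientAddGroup.lift (Cl k) (phi k) (cl_le_ker k hk)

lemma phibar_mkq (k : ℕ) (hk : 1 ≤ k) (x : Fin (2*k+1) → ℤ) :
    phibar k hk (mkq k x) = phi k x := rfl

lemma phibar_psi (k : ℕ) (hk : 1 ≤ k) (p : Tgt k) : phibar k hk (psi k hk p) = p := by
  rw [psi_apply, map_add, map_sum]
  have h1 : ∀ h : Fin (k-1), phibar k hk (p.1 h • mkq k (eN k (2*h.val+2)))
      = p.1 h • (unit k h.val, (0 : ZMod 2)) := by
    intro h
    rw [map_zsmul, phibar_mkq, phi_eN k _ (by have := h.isLt; omega)]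
    have hh := h.isLt
    rw [aN_even k _ (by omega) (by omega) (by omega),
      show (2*h.val+2)/2 - 1 = h.val from by omega]
  rw [Finset.sum_congr rfl (fun h _ => h1 h)]
  have h2 : phibar k hk (tau k hk p.2) = ((0 : Fin (k-1) → ℤ), p.2) := by
    obtain ⟨n, hn⟩ := ZMod.intCast_surjective p.2
    rw [← hn, tau_intCast, map_zsmul, phibar_mkq, phi_eN k 0 (by omega), aN_zero]
    refine Prod.ext ?_ ?_
    · simp
    · show n • (1 : ZMod 2) = (n : ZMod 2)
      simp [zsmul_eq_mul]
  rw [h2]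
  refine Prod.ext ?_ ?_
  · simp only [Prod.fst_add, Prod.fst_sum, Prod.fst_zero]
    rw [add_zero]
    funext i
    rw [Finset.sum_apply]
    rw [Finset.sum_eq_single i]
    · simp [unit]
    · intro b _ hb
      have : i.val ≠ b.val := fun hc => hb (Fin.ext hc.symm)
      simp [unit, this]
    · simp
  · simp only [Prod.snd_add, Prod.snd_sum]
    simp

lemma one_zmod2 : (1 : ZMod 2) = ((1:ℤ) : ZMod 2) := by norm_num

lemma hesum (k : ℕ) :
    (∑ h : Fin (k-1), mkq k (eN k (2*h.val+2))) = mkq k (esum k) := by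
  unfold esum
  exact (map_sum (mkq k) _ _).symm

lemma key (k : ℕ) (hk : 1 ≤ k) (j : Fin (2*k+1)) :
    psi k hk (aN k j.val) = mkq k (eN k j.val) := by
  have hj := j.isLt
  by_cases h0 : j.val = 0
  · rw [h0, aN_zero, psi_apply]
    dsimp only
    simp only [Pi.zero_apply, zero_smul, Finset.sum_const_zero, zero_add]
    rw [one_zmod2, tau_intCast, one_smul]
  · by_cases h2k : j.val = 2*k
    · rw [h2k, aN_last_even k hk, psi_apply]
      dsimp only
      have hones : ∀ h : Fin (k-1), (-(ones k)) h • mkq k (eN k (2*h.val+2))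
          = -(mkq k (eN k (2*h.val+2))) := by
        intro h
        show ((-(1:ℤ))) • _ = _
        rw [neg_smul, one_smul]
      rw [Finset.sum_congr rfl (fun h _ => hones h), Finset.sum_neg_distrib, hesum,
        one_zmod2, tau_intCast, one_smul, ← map_neg, ← map_add,
        QuotientAddGroup.mk'_eq_mk']
      exact ⟨_, f3_mem k hk, by abel⟩
    · by_cases h2k1 : j.val = 2*k-1
      · rw [h2k1, aN_last_odd k hk, psi_apply]
        dsimp only
        have hones : ∀ h : Fin (k-1), (ones k) h • mkq k (eN k (2*h.val+2))
            = mkq k (eN k (2*h.val+2)) := fun h => one_smul _ _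
        rw [Finset.sum_congr rfl (fun h _ => hones h), hesum,
          one_zmod2, tau_intCast, one_smul, ← map_add, QuotientAddGroup.mk'_eq_mk']
        exact ⟨_, f2_mem k hk, by abel⟩
      · by_cases hev : j.val % 2 = 0
        · rw [aN_even k j.val hev h0 h2k, psi_apply]
          dsimp only
          have hlt : j.val/2 - 1 < k - 1 := by omega
          rw [map_zero, add_zero, Finset.sum_eq_single (⟨j.val/2-1, hlt⟩ : Fin (k-1))]
          · show (if ((⟨j.val/2-1, hlt⟩ : Fin (k-1))).val = j.val/2-1 then (1:ℤ) else 0) • _ = _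
            dsimp only
            rw [if_pos rfl, one_smul, show 2*(j.val/2-1)+2 = j.val from by omega]
          · intro b _ hb
            have hbv : b.val ≠ j.val/2-1 := fun hc => hb (Fin.ext hc)
            show (if b.val = j.val/2-1 then (1:ℤ) else 0) • _ = _
            rw [if_neg hbv]
            exact zero_zsmul _
          · simp
        · rw [aN_odd k j.val (by omega) h2k1, psi_apply]
          dsimp only
          have hlt : j.val/2 < k - 1 := by omega
          rw [map_zero, add_zero, Finset.sum_eq_single (⟨j.val/2, hlt⟩ : Fin (k-1))]
          · show (-(if ((⟨j.val/2, hlt⟩ : Fin (k-1))).val = j.val/2 then (1:ℤ) else 0)) • _ = _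
            dsimp only
            rw [if_pos rfl, neg_smul, one_smul, show 2*(j.val/2)+2 = j.val+1 from by omega,
              ← map_neg, QuotientAddGroup.mk'_eq_mk']
            have hp := pair_mem k ((j.val+1)/2) (by omega) (by omega)
            rw [show 2*((j.val+1)/2)-1 = j.val from by omega,
              show 2*((j.val+1)/2) = j.val+1 from by omega] at hp
            exact ⟨_, hp, by abel⟩
          · intro b _ hb
            have hbv : b.val ≠ j.val/2 := fun hc => hb (Fin.ext hc)
            show (-(if b.val = j.val/2 then (1:ℤ) else 0)) • _ = _
            rw [if_neg hbv, neg_zero]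
            exact zero_zsmul _
          · simp

lemma psi_phi (k : ℕ) (hk : 1 ≤ k) (x : Fin (2*k+1) → ℤ) :
    psi k hk (phi k x) = mkq k x := by
  have hxsum : (∑ j : Fin (2*k+1), x j • eN k j.val) = x := by
    funext i
    rw [Finset.sum_apply, Finset.sum_eq_single i]
    · simp [eN]
    · intro b _ hb
      have : i.val ≠ b.val := fun hc => hb (Fin.ext hc.symm)
      simp [eN, this]
    · simp
  rw [phi_apply, map_sum]
  rw [Finset.sum_congr rfl (fun j _ => by rw [map_zsmul, key k hk j])]
  have h2 : ∑ j : Fin (2*k+1), x j • mkq k (eN k j.val)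
      = mkq k (∑ j : Fin (2*k+1), x j • eN k j.val) := by
    rw [map_sum]
    exact Finset.sum_congr rfl (fun j _ => (map_zsmul (mkq k) _ _).symm)
  rw [h2, hxsum]

end QVC

/-- The quotient of ℤ^{2k+1} by the subgroup generated by the k+2 vectors
v₀, v₁, …, v_k, v_{k+1} is ℤ^{k-1} ⊕ ℤ/2. -/
theorem quotient_by_vanishing_cycles (k : ℕ) (hk : 1 ≤ k) :
    Nonempty (((Fin (2 * k + 1) → ℤ) ⧸
        AddSubgroup.closure (Set.range (relVec k))) ≃+
      ((Fin (k - 1) → ℤ) × ZMod 2)) := by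
  refine ⟨AddMonoidHom.toAddEquiv (QVC.phibar k hk) (QVC.psi k hk) ?_ ?_⟩
  · refine AddMonoidHom.ext fun q => ?_
    refine QuotientAddGroup.induction_on q (fun x => ?_)
    exact QVC.psi_phi k hk x
  · exact AddMonoidHom.ext fun p => QVC.phibar_psi k hk p
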